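/- Let {x^k} be a sequence generated by Algorithm 3.1 with data M > 0 and x⁰. Suppose there is a real r > 0 such that M is a Lipschitz constant of f on the closed ball B(x⁰, r), the closed ball B(x⁰, r/2) contains a point of Q, and the envelope f is strictly convex. Then the sequence {x^k} converges to some point x* with f(x*) ≤ 0 (i.e., x* ∈ Q). -/

import Mathlib

open Filter Topology

noncomputable section

abbrev Euc (n : ℕ) := EuclideanSpace ℝ (Fin n)

/-- `ξ` is a subgradient of `g` at `x`. -/
def IsSubgradAt {n : ℕ} (g : Euc n → ℝ) (x ξ : Euc n) : Prop :=
  ∀ y : Euc n, g x + (inner ℝ ξ (y - x) : ℝ) ≤ g y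

/-- The envelope `f(x) = max_i f_i(x)` of finitely many functions. -/
def envl {n m : ℕ} [NeZero m] (f : Fin m → Euc n → ℝ) (x : Euc n) : ℝ :=
  Finset.univ.sup' Finset.univ_nonempty fun i => f i x

/-- The sequence `x` with relaxation parameters `lam` is generated by Algorithm 3.1
with data `M` for the family `f`. -/
def IsAlgSeq {n m : ℕ} [NeZero m] (f : Fin m → Euc n → ℝ) (M : ℝ)
    (x : ℕ → Euc n) (lam : ℕ → ℝ) : Prop :=
  ∀ k : ℕ, 0 ≤ lam k ∧
    max 0 (envl f (x k)) ≤ lam k * M ^ 2 ∧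
    lam k * M ^ 2 ≤ 2 * max 0 (envl f (x k)) ∧
    ∃ (w : Fin m → ℝ) (ξ : Fin m → Euc n),
      (∀ i, 0 ≤ w i) ∧ (∑ i, w i) = 1 ∧
      (∀ i, f i (x k) < envl f (x k) → w i = 0) ∧
      (∀ i, IsSubgradAt (f i) (x k) (ξ i)) ∧
      x (k + 1) = x k - lam k • ∑ i, w i • ξ i

/-- the envelope dominates each `f i`. -/
lemma le_envl {n m : ℕ} [NeZero m] (f : Fin m → Euc n → ℝ) (i : Fin m) (y : Euc n) :
    f i y ≤ envl f y :=
  Finset.le_sup' (fun j => f j y) (Finset.mem_univ i)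

/-- a convex combination of subgradients of active functions is a subgradient of the
envelope. -/
lemma envl_subgrad {n m : ℕ} [NeZero m] (f : Fin m → Euc n → ℝ) (a : Euc n)
    (w : Fin m → ℝ) (ξ : Fin m → Euc n) (hw0 : ∀ i, 0 ≤ w i) (hw1 : (∑ i, w i) = 1)
    (hact : ∀ i, f i a < envl f a → w i = 0)
    (hξ : ∀ i, IsSubgradAt (f i) a (ξ i)) :
    IsSubgradAt (envl f) a (∑ i, w i • ξ i) := by
  intro y
  have h2 : ∑ i, w i * f i a = envl f a := by
    have h1 : ∀ i ∈ Finset.univ, w i * f i a = w i * envl f a := by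
      intro i _
      rcases lt_or_eq_of_le (le_envl f i a) with h | h
      · rw [hact i h]; ring
      · rw [h]
    rw [Finset.sum_congr rfl h1, ← Finset.sum_mul, hw1, one_mul]
  have h3 : (inner ℝ (∑ i, w i • ξ i) (y - a) : ℝ) = ∑ i, w i * (inner ℝ (ξ i) (y - a) : ℝ) := by
    rw [sum_inner]
    exact Finset.sum_congr rfl fun i _ => real_inner_smul_left _ _ _
  have h4 : ∑ i, w i * (f i a + (inner ℝ (ξ i) (y - a) : ℝ)) ≤ ∑ i, w i * f i y :=
    Finset.sum_le_sum fun i _ => mul_le_mul_of_nonneg_left (hξ i y) (hw0 i)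
  have h5 : ∑ i, w i * f i y ≤ envl f y := by
    calc ∑ i, w i * f i y ≤ ∑ i, w i * envl f y :=
          Finset.sum_le_sum fun i _ => mul_le_mul_of_nonneg_left (le_envl f i y) (hw0 i)
      _ = envl f y := by rw [← Finset.sum_mul, hw1, one_mul]
  calc envl f a + (inner ℝ (∑ i, w i • ξ i) (y - a) : ℝ)
      = ∑ i, w i * (f i a + (inner ℝ (ξ i) (y - a) : ℝ)) := by
        rw [h3, ← h2]; rw [← Finset.sum_add_distrib]; exact Finset.sum_congr rfl fun i _ => by ring
    _ ≤ ∑ i, w i * f i y := h4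
    _ ≤ envl f y := h5

/-- subgradient norm bound at interior points from a Lipschitz bound on the ball. -/
lemma subgrad_norm_le {n : ℕ} (g : Euc n → ℝ) (x0 : Euc n) (r M : ℝ) (hM : 0 ≤ M)
    (hLip : ∀ y z : Euc n, y ∈ Metric.closedBall x0 r → z ∈ Metric.closedBall x0 r →
      |g y - g z| ≤ M * ‖y - z‖)
    (a ν : Euc n) (ha : ‖a - x0‖ < r) (hν : IsSubgradAt g a ν) : ‖ν‖ ≤ M := by
  rcases eq_or_ne ν 0 with h | h
  · simpa [h] using hM
  · set s : ℝ := r - ‖a - x0‖ with hs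
    have hspos : 0 < s := by simp [hs]; linarith
    set y : Euc n := a + (s * ‖ν‖⁻¹) • ν with hy
    have hnν : 0 < ‖ν‖ := norm_pos_iff.mpr h
    have hyx : y - a = (s * ‖ν‖⁻¹) • ν := by simp [hy]
    have hyn : ‖y - a‖ = s := by
      rw [hyx, norm_smul, Real.norm_eq_abs, abs_of_nonneg (by positivity : (0:ℝ) ≤ s * ‖ν‖⁻¹)]
      field_simp
    have hamem : a ∈ Metric.closedBall x0 r := by
      rw [Metric.mem_closedBall, dist_eq_norm]; linarith
    have hymem : y ∈ Metric.closedBall x0 r := by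
      rw [Metric.mem_closedBall, dist_eq_norm]
      calc ‖y - x0‖ ≤ ‖y - a‖ + ‖a - x0‖ := by
            have := norm_sub_le_norm_sub_add_norm_sub y a x0
            simpa using this
        _ ≤ r := by rw [hyn]; linarith
    have h1 : g a + (inner ℝ ν (y - a) : ℝ) ≤ g y := hν y
    have h2 : (inner ℝ ν (y - a) : ℝ) = s * ‖ν‖ := by
      rw [hyx, real_inner_smul_right, real_inner_self_eq_norm_sq]
      field_simp
    have h3 : g y - g a ≤ M * s := by
      have := hLip y a hymem hamem
      have h4 : g y - g a ≤ |g y - g a| := le_abs_self _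
      rw [hyn] at this
      linarith
    have : s * ‖ν‖ ≤ M * s := by linarith [h1, h2, h3]
    have := (mul_le_mul_iff_right₀ hspos).mp (by linarith [this] : s * ‖ν‖ ≤ s * M)
    exact this

set_option maxHeartbeats 2000000 in
theorem stmt1
    {n m : ℕ} (hn : 0 < n) [NeZero m] (f : Fin m → Euc n → ℝ)
    (hconv : ∀ i, ConvexOn ℝ Set.univ (f i))
    (M : ℝ) (hM : 0 < M) (x : ℕ → Euc n) (lam : ℕ → ℝ)
    (halg : IsAlgSeq f M x lam) (x0 : Euc n) (hx0 : x 0 = x0)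
    (r : ℝ) (hr : 0 < r)
    (hLip : ∀ y z : Euc n, y ∈ Metric.closedBall x0 r → z ∈ Metric.closedBall x0 r →
      |envl f y - envl f z| ≤ M * ‖y - z‖)
    (hfeas : ∃ z : Euc n, z ∈ Metric.closedBall x0 (r / 2) ∧ envl f z ≤ 0)
    (hstrict : StrictConvexOn ℝ Set.univ (envl f)) :
    ∃ xs : Euc n, Tendsto x atTop (𝓝 xs) ∧ envl f xs ≤ 0 := by
  classical
  set g : Euc n → ℝ := envl f with hg
  obtain ⟨z₀, hz₀mem, hgz₀⟩ := hfeas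
  have hz₀r : ‖z₀ - x0‖ ≤ r / 2 := by
    rw [Metric.mem_closedBall, dist_eq_norm] at hz₀mem; exact hz₀mem
  have hlam0 : ∀ k, 0 ≤ lam k := fun k => (halg k).1
  have hlam1 : ∀ k, max 0 (g (x k)) ≤ lam k * M ^ 2 := fun k => (halg k).2.1
  have hlam2 : ∀ k, lam k * M ^ 2 ≤ 2 * max 0 (g (x k)) := fun k => (halg k).2.2.1
  have hνex : ∀ k, ∃ ν : Euc n, IsSubgradAt g (x k) ν ∧ x (k + 1) = x k - lam k • ν := by
    intro k
    obtain ⟨-, -, -, w, ξ, hw0, hw1, hact, hξ, hstepk⟩ := halg k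
    exact ⟨∑ i, w i • ξ i, envl_subgrad f (x k) w ξ hw0 hw1 hact hξ, hstepk⟩
  choose ν hν hstep using hνex
  have hM2 : (0:ℝ) < M ^ 2 := by positivity
  by_cases hB : ∀ k, 0 < g (x k)
  · -- main case: never feasible
    have hlam1' : ∀ k, g (x k) ≤ lam k * M ^ 2 := by
      intro k; have := hlam1 k; rwa [max_eq_right (hB k).le] at this
    have hlam2' : ∀ k, lam k * M ^ 2 ≤ 2 * g (x k) := by
      intro k; have := hlam2 k; rwa [max_eq_right (hB k).le] at this
    have hlampos : ∀ k, 0 < lam k := by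
      intro k
      nlinarith [hlam1' k, hB k, hlam0 k, hM2]
    have hne : ∀ k, x k ≠ z₀ := by
      intro k h
      have := hB k; rw [h] at this; linarith
    -- the strict convexity gap
    set Φ : ℕ → ℝ := fun k => g (x k) + g z₀ - 2 * g ((1/2 : ℝ) • x k + (1/2 : ℝ) • z₀)
      with hΦdef
    have hΦpos : ∀ k, 0 < Φ k := by
      intro k
      have := hstrict.2 (Set.mem_univ (x k)) (Set.mem_univ z₀) (hne k)
        (by norm_num : (0:ℝ) < 1/2) (by norm_num : (0:ℝ) < 1/2) (by norm_num)
      simp only [smul_eq_mul] at this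
      simp only [hΦdef]
      linarith
    have hgap : ∀ k, g (x k) + Φ k ≤ (inner ℝ (ν k) (x k - z₀) : ℝ) := by
      intro k
      have h1 := hν k ((1/2 : ℝ) • x k + (1/2 : ℝ) • z₀)
      have h2 : ((1/2 : ℝ) • x k + (1/2 : ℝ) • z₀) - x k = (1/2 : ℝ) • (z₀ - x k) := by
        module
      rw [h2, real_inner_smul_right] at h1
      have h3 : (inner ℝ (ν k) (z₀ - x k) : ℝ) = -(inner ℝ (ν k) (x k - z₀) : ℝ) := by
        rw [← inner_neg_right, neg_sub]
      rw [h3] at h1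
      simp only [hΦdef]
      linarith
    -- one-step expansion identity
    have hexp : ∀ k (z : Euc n), ‖x (k+1) - z‖^2
        = ‖x k - z‖^2 - 2 * (lam k * (inner ℝ (ν k) (x k - z) : ℝ)) + lam k^2 * ‖ν k‖^2 := by
      intro k z
      have h1 : x (k+1) - z = (x k - z) - lam k • ν k := by rw [hstep k]; abel
      rw [h1, norm_sub_sq_real, real_inner_smul_right, real_inner_comm, norm_smul,
        Real.norm_eq_abs, abs_of_nonneg (hlam0 k), mul_pow]
    -- Fejer invariant
    have inv : ∀ k, ‖x k - z₀‖ ≤ r/2 ∧ ‖x k - x0‖ < r := by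
      intro k
      induction k with
      | zero =>
        constructor
        · rw [hx0, ← norm_sub_rev]; exact hz₀r
        · simp [hx0, hr]
      | succ k ih =>
        obtain ⟨ihρ, ihd⟩ := ih
        have hνM : ‖ν k‖ ≤ M := subgrad_norm_le g x0 r M hM.le hLip (x k) (ν k) ihd (hν k)
        have hkey : ‖x (k+1) - z₀‖^2 ≤ ‖x k - z₀‖^2 - 2 * (lam k * Φ k) := by
          have e0 : ‖ν k‖^2 ≤ M^2 := by
            have h0 := norm_nonneg (ν k); nlinarith [hνM]
          have e1a : lam k^2 * ‖ν k‖^2 ≤ lam k^2 * M^2 :=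
            mul_le_mul_of_nonneg_left e0 (sq_nonneg _)
          have e1b : lam k^2 * M^2 = lam k * (lam k * M^2) := by ring
          have e1c : lam k * (lam k * M^2) ≤ lam k * (2 * g (x k)) :=
            mul_le_mul_of_nonneg_left (hlam2' k) (hlam0 k)
          have e2 : lam k * (g (x k) + Φ k) ≤ lam k * (inner ℝ (ν k) (x k - z₀) : ℝ) :=
            mul_le_mul_of_nonneg_left (hgap k) (hlam0 k)
          have e3 := hexp k z₀
          have e2' : lam k * g (x k) + lam k * Φ k ≤ lam k * (inner ℝ (ν k) (x k - z₀) : ℝ) := by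
            rw [← mul_add]; exact e2
          linarith
        have hlt : ‖x (k+1) - z₀‖ < ‖x k - z₀‖ := by
          have h1 : 0 < lam k * Φ k := mul_pos (hlampos k) (hΦpos k)
          have h2 : ‖x (k+1) - z₀‖^2 < ‖x k - z₀‖^2 := by linarith
          exact lt_of_pow_lt_pow_left₀ 2 (norm_nonneg _) h2
        constructor
        · linarith
        · have htri : ‖x (k+1) - x0‖ ≤ ‖x (k+1) - z₀‖ + ‖z₀ - x0‖ := by
            simpa [dist_eq_norm] using dist_triangle (x (k+1)) z₀ x0
          have h5 : ‖x (k+1) - z₀‖ < r/2 := lt_of_lt_of_le hlt ihρ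
          linarith
    have hνM : ∀ k, ‖ν k‖ ≤ M := fun k =>
      subgrad_norm_le g x0 r M hM.le hLip (x k) (ν k) (inv k).2 (hν k)
    have hkey : ∀ k, ‖x (k+1) - z₀‖^2 ≤ ‖x k - z₀‖^2 - 2 * (lam k * Φ k) := by
      intro k
      have e0 : ‖ν k‖^2 ≤ M^2 := by
        have h0 := norm_nonneg (ν k); nlinarith [hνM k]
      have e1a : lam k^2 * ‖ν k‖^2 ≤ lam k^2 * M^2 :=
        mul_le_mul_of_nonneg_left e0 (sq_nonneg _)
      have e1b : lam k^2 * M^2 = lam k * (lam k * M^2) := by ring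
      have e1c : lam k * (lam k * M^2) ≤ lam k * (2 * g (x k)) :=
        mul_le_mul_of_nonneg_left (hlam2' k) (hlam0 k)
      have e2 : lam k * (g (x k) + Φ k) ≤ lam k * (inner ℝ (ν k) (x k - z₀) : ℝ) :=
        mul_le_mul_of_nonneg_left (hgap k) (hlam0 k)
      have e2' : lam k * g (x k) + lam k * Φ k ≤ lam k * (inner ℝ (ν k) (x k - z₀) : ℝ) := by
        rw [← mul_add]; exact e2
      linarith [hexp k z₀]
    -- partial sums of lam * Φ are bounded
    have hsum : ∀ K, ∑ k ∈ Finset.range K, 2 * (lam k * Φ k)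
        ≤ ‖x 0 - z₀‖^2 - ‖x K - z₀‖^2 := by
      intro K
      induction K with
      | zero => simp
      | succ K ih =>
        rw [Finset.sum_range_succ]
        have := hkey K
        linarith
    have hsummable : Summable (fun k => lam k * Φ k) := by
      apply summable_of_sum_range_le (c := ‖x 0 - z₀‖^2 / 2)
      · intro k; exact (mul_pos (hlampos k) (hΦpos k)).le
      · intro K
        have h1 := hsum K
        have h2 : (0:ℝ) ≤ ‖x K - z₀‖^2 := sq_nonneg _
        have h3 : ∑ k ∈ Finset.range K, 2 * (lam k * Φ k)
            = 2 * ∑ k ∈ Finset.range K, lam k * Φ k := by rw [Finset.mul_sum]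
        linarith [h3 ▸ h1]
    have hTzero : Tendsto (fun k => lam k * Φ k) atTop (𝓝 0) :=
      hsummable.tendsto_atTop_zero
    have hmem : ∀ k, x k ∈ Metric.closedBall x0 r := by
      intro k; rw [Metric.mem_closedBall, dist_eq_norm]; exact (inv k).2.le
    by_cases hexz : ∃ z', g z' < 0
    · -- strictly feasible point exists: lam summable, x Cauchy
      obtain ⟨z', hz'⟩ := hexz
      have hkey' : ∀ k, ‖x (k+1) - z'‖^2 ≤ ‖x k - z'‖^2 + 2 * (lam k * g z') := by
        intro k
        have hsub := hν k z'
        have h3 : (inner ℝ (ν k) (z' - x k) : ℝ) = -(inner ℝ (ν k) (x k - z') : ℝ) := by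
          rw [← inner_neg_right, neg_sub]
        rw [h3] at hsub
        have e0 : ‖ν k‖^2 ≤ M^2 := by
          have h0 := norm_nonneg (ν k); nlinarith [hνM k]
        have e1a : lam k^2 * ‖ν k‖^2 ≤ lam k^2 * M^2 :=
          mul_le_mul_of_nonneg_left e0 (sq_nonneg _)
        have e1b : lam k^2 * M^2 = lam k * (lam k * M^2) := by ring
        have e1c : lam k * (lam k * M^2) ≤ lam k * (2 * g (x k)) :=
          mul_le_mul_of_nonneg_left (hlam2' k) (hlam0 k)
        have e2 : lam k * (g (x k) - g z') ≤ lam k * (inner ℝ (ν k) (x k - z') : ℝ) :=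
          mul_le_mul_of_nonneg_left (by linarith) (hlam0 k)
        have e2' : lam k * g (x k) - lam k * g z' ≤ lam k * (inner ℝ (ν k) (x k - z') : ℝ) := by
          rw [← mul_sub]; exact e2
        linarith [hexp k z']
      have hsum' : ∀ K, ∑ k ∈ Finset.range K, lam k * (-2 * g z')
          ≤ ‖x 0 - z'‖^2 - ‖x K - z'‖^2 := by
        intro K
        induction K with
        | zero => simp
        | succ K ih =>
          rw [Finset.sum_range_succ]
          have := hkey' K
          linarith
      have hc : (0:ℝ) < -2 * g z' := by linarith
      have hlamsummable : Summable lam := by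
        have h1 : Summable (fun k => lam k * (-2 * g z')) := by
          apply summable_of_sum_range_le (c := ‖x 0 - z'‖^2)
          · intro k; exact mul_nonneg (hlam0 k) hc.le
          · intro K; linarith [hsum' K, sq_nonneg ‖x K - z'‖]
        have h2 := h1.div_const (-2 * g z')
        have h3 : (fun k => lam k * (-2 * g z') / (-2 * g z')) = lam := by
          funext k; rw [mul_div_assoc, div_self (ne_of_gt hc), mul_one]
        rwa [h3] at h2
      have hdist : ∀ k, dist (x k) (x (k+1)) ≤ lam k * M := by
        intro k
        rw [dist_eq_norm, hstep k]
        have : x k - (x k - lam k • ν k) = lam k • ν k := by abel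
        rw [this, norm_smul, Real.norm_eq_abs, abs_of_nonneg (hlam0 k)]
        exact mul_le_mul_of_nonneg_left (hνM k) (hlam0 k)
      have hcauchy : CauchySeq x := by
        apply cauchySeq_of_summable_dist
        exact Summable.of_nonneg_of_le (fun k => dist_nonneg) hdist (hlamsummable.mul_right M)
      obtain ⟨xs, hxs⟩ := cauchySeq_tendsto_of_complete hcauchy
      refine ⟨xs, hxs, ?_⟩
      have hxsmem : xs ∈ Metric.closedBall x0 r :=
        Metric.isClosed_closedBall.mem_of_tendsto hxs (Eventually.of_forall hmem)
      have hgx0 : Tendsto (fun k => g (x k)) atTop (𝓝 0) := by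
        have hlamz : Tendsto lam atTop (𝓝 0) := hlamsummable.tendsto_atTop_zero
        have h1 : Tendsto (fun k => lam k * M^2) atTop (𝓝 0) := by
          simpa using hlamz.mul_const (M^2)
        exact squeeze_zero (fun k => (hB k).le) (fun k => hlam1' k) h1
      have hgxs : Tendsto (fun k => g (x k)) atTop (𝓝 (g xs)) := by
        rw [tendsto_iff_dist_tendsto_zero]
        apply squeeze_zero (fun k => dist_nonneg)
          (fun k => ?_) (g := fun k => M * dist (x k) xs)
        · have : Tendsto (fun k => dist (x k) xs) atTop (𝓝 0) :=
            tendsto_iff_dist_tendsto_zero.mp hxs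
          simpa using this.const_mul M
        · rw [Real.dist_eq]
          have := hLip (x k) xs (hmem k) hxsmem
          rw [← dist_eq_norm] at this
          exact this
      have : g xs = 0 := tendsto_nhds_unique hgxs hgx0
      linarith
    · -- g is everywhere nonnegative: converge to z₀
      push_neg at hexz
      have hanti : Antitone (fun k => ‖x k - z₀‖) := by
        apply antitone_nat_of_succ_le
        intro k
        have h1 : 0 ≤ lam k * Φ k := (mul_pos (hlampos k) (hΦpos k)).le
        have h2 : ‖x (k+1) - z₀‖^2 ≤ ‖x k - z₀‖^2 := by linarith [hkey k]
        exact le_of_pow_le_pow_left₀ (by norm_num) (norm_nonneg _) h2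
      have hbdd : BddBelow (Set.range fun k => ‖x k - z₀‖) := by
        refine ⟨0, ?_⟩; rintro y ⟨k, rfl⟩; exact norm_nonneg _
      have hρL : Tendsto (fun k => ‖x k - z₀‖) atTop (𝓝 (⨅ k, ‖x k - z₀‖)) :=
        tendsto_atTop_ciInf hanti hbdd
      obtain ⟨xb, hxbmem, φs, hφs, hφconv⟩ :=
        (isCompact_closedBall x0 r).tendsto_subseq hmem
      have hφat : Tendsto φs atTop atTop := hφs.tendsto_atTop
      have hρsub : Tendsto (fun j => ‖x (φs j) - z₀‖) atTop (𝓝 ‖xb - z₀‖) := by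
        have hcont : Continuous fun y : Euc n => ‖y - z₀‖ :=
          (continuous_id.sub continuous_const).norm
        exact (hcont.tendsto xb).comp hφconv
      have hL : (⨅ k, ‖x k - z₀‖) = ‖xb - z₀‖ :=
        tendsto_nhds_unique (hρL.comp hφat) hρsub
      -- limit of g along the subsequence (Lipschitz transfer)
      have hgsub : Tendsto (fun j => g (x (φs j))) atTop (𝓝 (g xb)) := by
        rw [tendsto_iff_dist_tendsto_zero]
        apply squeeze_zero (fun j => dist_nonneg)
          (fun j => ?_) (g := fun j => M * dist (x (φs j)) xb)
        · have : Tendsto (fun j => dist (x (φs j)) xb) atTop (𝓝 0) :=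
            tendsto_iff_dist_tendsto_zero.mp hφconv
          simpa using this.const_mul M
        · rw [Real.dist_eq]
          have := hLip (x (φs j)) xb (hmem _) hxbmem
          rw [← dist_eq_norm] at this
          exact this
      have hxbz : xb = z₀ := by
        by_contra hnexb
        -- midpoints
        set mid : ℕ → Euc n := fun k => (1/2 : ℝ) • x k + (1/2 : ℝ) • z₀ with hmid
        set midb : Euc n := (1/2 : ℝ) • xb + (1/2 : ℝ) • z₀ with hmidb
        have hz₀mem' : z₀ ∈ Metric.closedBall x0 r := by
          rw [Metric.mem_closedBall, dist_eq_norm]; linarith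
        have hmidmem : ∀ k, mid k ∈ Metric.closedBall x0 r := by
          intro k
          rw [Metric.mem_closedBall, dist_eq_norm]
          have h1 : mid k - x0 = (1/2 : ℝ) • (x k - x0) + (1/2 : ℝ) • (z₀ - x0) := by
            simp only [hmid]; module
          rw [h1]
          calc ‖(1/2 : ℝ) • (x k - x0) + (1/2 : ℝ) • (z₀ - x0)‖
              ≤ ‖(1/2 : ℝ) • (x k - x0)‖ + ‖(1/2 : ℝ) • (z₀ - x0)‖ := norm_add_le _ _
            _ = (1/2) * ‖x k - x0‖ + (1/2) * ‖z₀ - x0‖ := by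
              rw [norm_smul, norm_smul]; norm_num
            _ ≤ (1/2) * r + (1/2) * (r/2) := by
              have := (inv k).2.le
              have := hz₀r
              nlinarith
            _ ≤ r := by linarith
        have hmidbmem : midb ∈ Metric.closedBall x0 r := by
          rw [Metric.mem_closedBall, dist_eq_norm]
          have h1 : midb - x0 = (1/2 : ℝ) • (xb - x0) + (1/2 : ℝ) • (z₀ - x0) := by
            simp only [hmidb]; module
          rw [h1]
          have hxb : ‖xb - x0‖ ≤ r := by
            rw [← dist_eq_norm]; exact Metric.mem_closedBall.mp hxbmem
          calc ‖(1/2 : ℝ) • (xb - x0) + (1/2 : ℝ) • (z₀ - x0)‖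
              ≤ ‖(1/2 : ℝ) • (xb - x0)‖ + ‖(1/2 : ℝ) • (z₀ - x0)‖ := norm_add_le _ _
            _ = (1/2) * ‖xb - x0‖ + (1/2) * ‖z₀ - x0‖ := by
              rw [norm_smul, norm_smul]; norm_num
            _ ≤ r := by nlinarith
        have hmidconv : Tendsto (fun j => g (mid (φs j))) atTop (𝓝 (g midb)) := by
          rw [tendsto_iff_dist_tendsto_zero]
          apply squeeze_zero (fun j => dist_nonneg)
            (fun j => ?_) (g := fun j => M * ((1/2) * dist (x (φs j)) xb))
          · have : Tendsto (fun j => dist (x (φs j)) xb) atTop (𝓝 0) :=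
              tendsto_iff_dist_tendsto_zero.mp hφconv
            have h2 := (this.const_mul (1/2 : ℝ)).const_mul M
            simpa [mul_assoc] using h2
          · have h3 := hLip (mid (φs j)) midb (hmidmem _) hmidbmem
            have h4 : mid (φs j) - midb = (1/2 : ℝ) • (x (φs j) - xb) := by
              simp only [hmid, hmidb]; module
            rw [h4, norm_smul, Real.norm_eq_abs] at h3
            have h5 : dist (g (mid (φs j))) (g midb) ≤ M * (1/2 * dist (x (φs j)) xb) := by
              rw [Real.dist_eq, dist_eq_norm]
              calc |g (mid (φs j)) - g midb| ≤ M * (|(1:ℝ)/2| * ‖x (φs j) - xb‖) := h3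
                _ = M * (1/2 * ‖x (φs j) - xb‖) := by norm_num
            exact h5
        have hΦsub : Tendsto (fun j => Φ (φs j)) atTop
            (𝓝 (g xb + g z₀ - 2 * g midb)) := by
          simp only [hΦdef]
          exact ((hgsub.add_const (g z₀)).sub (hmidconv.const_mul 2))
        have hΦbpos : 0 < g xb + g z₀ - 2 * g midb := by
          have := hstrict.2 (Set.mem_univ xb) (Set.mem_univ z₀) hnexb
            (by norm_num : (0:ℝ) < 1/2) (by norm_num : (0:ℝ) < 1/2) (by norm_num)
          simp only [smul_eq_mul] at this
          simp only [hmidb]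
          linarith
        have hTsub : Tendsto (fun j => lam (φs j) * Φ (φs j)) atTop (𝓝 0) :=
          hTzero.comp hφat
        have hlamsub : Tendsto (fun j => lam (φs j)) atTop (𝓝 0) := by
          have hquot : Tendsto (fun j => (lam (φs j) * Φ (φs j)) / Φ (φs j)) atTop
              (𝓝 (0 / (g xb + g z₀ - 2 * g midb))) := hTsub.div hΦsub (ne_of_gt hΦbpos)
          rw [zero_div] at hquot
          apply hquot.congr'
          have hev : ∀ᶠ j in atTop, 0 < Φ (φs j) :=
            hΦsub.eventually (eventually_gt_nhds hΦbpos)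
          filter_upwards [hev] with j hj
          rw [mul_div_assoc, div_self (ne_of_gt hj), mul_one]
        have hgxb : g xb = 0 := by
          have h1 : Tendsto (fun j => g (x (φs j))) atTop (𝓝 0) := by
            have h2 : Tendsto (fun j => lam (φs j) * M^2) atTop (𝓝 0) := by
              simpa using hlamsub.mul_const (M^2)
            exact squeeze_zero (fun j => (hB _).le) (fun j => hlam1' _) h2
          exact tendsto_nhds_unique hgsub h1
        have : g midb < 0 := by
          have := hstrict.2 (Set.mem_univ xb) (Set.mem_univ z₀) hnexb
            (by norm_num : (0:ℝ) < 1/2) (by norm_num : (0:ℝ) < 1/2) (by norm_num)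
          simp only [smul_eq_mul] at this
          rw [hgxb] at this
          simp only [hmidb]
          nlinarith [hgz₀]
        exact absurd (hexz midb) (not_le.mpr this)
      -- now the whole sequence converges to z₀
      have hL0 : (⨅ k, ‖x k - z₀‖) = 0 := by rw [hL, hxbz, sub_self, norm_zero]
      refine ⟨z₀, ?_, hgz₀⟩
      rw [tendsto_iff_dist_tendsto_zero]
      have : Tendsto (fun k => ‖x k - z₀‖) atTop (𝓝 0) := hL0 ▸ hρL
      exact this.congr fun k => (dist_eq_norm _ _).symm
  · -- eventually feasible: sequence is eventually constant
    push_neg at hB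
    obtain ⟨k₀, hk₀⟩ := hB
    have hconst : ∀ j, x (k₀ + j) = x k₀ := by
      have haux : ∀ j, x (k₀ + j) = x k₀ ∧ g (x (k₀ + j)) ≤ 0 := by
        intro j
        induction j with
        | zero => exact ⟨rfl, hk₀⟩
        | succ j ih =>
          obtain ⟨ih1, ih2⟩ := ih
          have hmax : max 0 (g (x (k₀ + j))) = 0 := max_eq_left ih2
          have hlz : lam (k₀ + j) = 0 := by
            have h1 := hlam2 (k₀ + j)
            rw [hmax] at h1
            nlinarith [hlam0 (k₀ + j), hM2]
          have hx1 : x (k₀ + j + 1) = x (k₀ + j) := by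
            rw [hstep (k₀ + j), hlz, zero_smul, sub_zero]
          have : k₀ + (j + 1) = k₀ + j + 1 := by ring
          rw [this, hx1]
          exact ⟨ih1, ih1 ▸ ih2⟩
      exact fun j => (haux j).1
    refine ⟨x k₀, ?_, hk₀⟩
    apply tendsto_atTop_of_eventually_const (i₀ := k₀)
    intro i hi
    have : i = k₀ + (i - k₀) := by omega
    rw [this, hconst]
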